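/- There exists c₀ > 0 such that for every c ≥ c₀ there is a constant C with Σ_{m > M(n)} P(T_n = m) ≤ C/n for all n ≥ 3, where M(n) := c·n·(log n)/(log log 3n). -/

import Mathlib

open MeasureTheory ProbabilityTheory Filter Finset

/-- `T n = ∑_{1 ≤ k ≤ n} k · Z k`. -/
def T {Ω : Type*} (Z : ℕ → Ω → ℕ) (n : ℕ) (ω : Ω) : ℕ :=
  ∑ k ∈ Finset.Icc 1 n, k * Z k ω

/-- `M n = c·n·(log n)/(log log 3n)`. -/
noncomputable def Mfun (c : ℝ) (n : ℕ) : ℝ :=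
  c * n * Real.log n / Real.log (Real.log (3 * n))


section Aux
open scoped ENNReal
variable {Ω : Type*} [MeasureSpace Ω] [IsProbabilityMeasure (ℙ : Measure Ω)]

lemma ae_two (Z : ℕ → Ω → ℕ) (hZmeas : ∀ k, Measurable (Z k))
    (hZ1 : ∀ k : ℕ, 1 ≤ k → ℙ {ω | Z k ω = 1} = 1 / k)
    (hZ0 : ∀ k : ℕ, 1 ≤ k → ℙ {ω | Z k ω = 0} = 1 - 1 / k)
    (k : ℕ) (hk : 1 ≤ k) : ∀ᵐ ω ∂(ℙ : Measure Ω), Z k ω = 0 ∨ Z k ω = 1 := by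
  have hA : MeasurableSet {ω | Z k ω = 1} := (hZmeas k) (measurableSet_singleton 1)
  have hB : MeasurableSet {ω | Z k ω = 0} := (hZmeas k) (measurableSet_singleton 0)
  have hdisj : Disjoint {ω | Z k ω = 0} {ω | Z k ω = 1} := by
    rw [Set.disjoint_left]; intro ω h0 h1; simp only [Set.mem_setOf_eq] at h0 h1; omega
  have hle : (1 : ℝ≥0∞) / k ≤ 1 := by
    exact ENNReal.div_le_of_le_mul (by simpa using (by exact_mod_cast hk : (1:ℝ≥0∞) ≤ k))
  have hunion : ℙ ({ω | Z k ω = 0} ∪ {ω | Z k ω = 1}) = 1 := by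
    rw [measure_union hdisj hA, hZ0 k hk, hZ1 k hk, tsub_add_cancel_of_le hle]
  have hc := measure_compl (hB.union hA) (measure_ne_top ℙ _)
  rw [hunion, measure_univ, tsub_self] at hc
  have : ∀ᵐ ω ∂(ℙ : Measure Ω), ω ∈ {ω | Z k ω = 0} ∪ {ω | Z k ω = 1} := by
    rw [MeasureTheory.ae_iff]
    convert hc using 2 <;> try (ext ω; simp [Set.mem_compl_iff])
  filter_upwards [this] with ω hω
  simpa using hω

lemma mgf_single (Z : ℕ → Ω → ℕ) (hZmeas : ∀ k, Measurable (Z k))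
    (hZ1 : ∀ k : ℕ, 1 ≤ k → ℙ {ω | Z k ω = 1} = 1 / k)
    (hZ0 : ∀ k : ℕ, 1 ≤ k → ℙ {ω | Z k ω = 0} = 1 - 1 / k)
    (k : ℕ) (hk : 1 ≤ k) (t : ℝ) :
    Integrable (fun ω => Real.exp (t * ((k * Z k ω : ℕ) : ℝ))) ℙ ∧
    mgf (fun ω => ((k * Z k ω : ℕ) : ℝ)) ℙ t
      = (1 - 1/(k:ℝ)) + Real.exp (t * k) * (1/(k:ℝ)) := by
  have hA : MeasurableSet {ω | Z k ω = 1} := (hZmeas k) (measurableSet_singleton 1)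
  have hB : MeasurableSet {ω | Z k ω = 0} := (hZmeas k) (measurableSet_singleton 0)
  set f : Ω → ℝ := {ω | Z k ω = 0}.indicator (fun _ => 1)
    + {ω | Z k ω = 1}.indicator (fun _ => Real.exp (t * k)) with hf
  have hfint : Integrable f ℙ :=
    ((integrable_const (1:ℝ)).indicator hB).add ((integrable_const _).indicator hA)
  have hae : (fun ω => Real.exp (t * ((k * Z k ω : ℕ) : ℝ))) =ᵐ[ℙ] f := by
    filter_upwards [ae_two Z hZmeas hZ1 hZ0 k hk] with ω hω
    rcases hω with h | h <;>
      simp [hf, Set.indicator_apply, h, Pi.add_apply]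
  have hgint : Integrable (fun ω => Real.exp (t * ((k * Z k ω : ℕ) : ℝ))) ℙ :=
    hfint.congr hae.symm
  refine ⟨hgint, ?_⟩
  have h1 : (ℙ {ω | Z k ω = 1}).toReal = 1/(k:ℝ) := by
    rw [hZ1 k hk]; simp [ENNReal.toReal_div]
  have hle : (1 : ℝ≥0∞) / k ≤ 1 :=
    ENNReal.div_le_of_le_mul (by simpa using (by exact_mod_cast hk : (1:ℝ≥0∞) ≤ k))
  have h0 : (ℙ {ω | Z k ω = 0}).toReal = 1 - 1/(k:ℝ) := by
    rw [hZ0 k hk, ENNReal.toReal_sub_of_le hle (by simp)]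
    simp [ENNReal.toReal_div]
  rw [mgf, integral_congr_ae hae, hf]
  simp only [Pi.add_apply]
  rw [integral_add ((integrable_const (1:ℝ)).indicator hB)
    ((integrable_const _).indicator hA), integral_indicator_const _ hB,
    integral_indicator_const _ hA, measureReal_def, measureReal_def, h0, h1]
  simp [smul_eq_mul]
  ring

lemma chernoffT (Z : ℕ → Ω → ℕ) (hZmeas : ∀ k, Measurable (Z k))
    (hZindep : iIndepFun Z ℙ)
    (hZ1 : ∀ k : ℕ, 1 ≤ k → ℙ {ω | Z k ω = 1} = 1 / k)
    (hZ0 : ∀ k : ℕ, 1 ≤ k → ℙ {ω | Z k ω = 0} = 1 - 1 / k)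
    (n : ℕ) (t : ℝ) (ht : 0 ≤ t) (ε : ℝ) :
    (ℙ {ω | ε ≤ ((T Z n ω : ℕ) : ℝ)}).toReal ≤
      Real.exp (-t * ε) * Real.exp (n * (t * Real.exp (t * n))) := by
  classical
  set Y : ℕ → Ω → ℝ := fun k ω => ((k * Z k ω : ℕ) : ℝ) with hY
  have hYmeas : ∀ k, Measurable (Y k) := fun k =>
    (measurable_from_top (f := fun m : ℕ => ((k * m : ℕ) : ℝ))).comp (hZmeas k)
  have hYindep : iIndepFun Y ℙ :=
    hZindep.comp (fun k m => ((k * m : ℕ) : ℝ)) (fun k => measurable_from_top)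
  have hX : (fun ω => ((T Z n ω : ℕ) : ℝ)) = ∑ k ∈ Finset.Icc 1 n, Y k := by
    funext ω
    simp only [T, Finset.sum_apply, hY, Nat.cast_sum]
  have hint : ∀ k ∈ Finset.Icc 1 n, Integrable (fun ω => Real.exp (t * Y k ω)) ℙ := by
    intro k hk
    exact (mgf_single Z hZmeas hZ1 hZ0 k (Finset.mem_Icc.mp hk).1 t).1
  have hintX : Integrable (fun ω => Real.exp (t * (∑ k ∈ Finset.Icc 1 n, Y k) ω)) ℙ :=
    hYindep.integrable_exp_mul_sum hYmeas hint
  have hch := measure_ge_le_exp_mul_mgf (μ := ℙ) (X := ∑ k ∈ Finset.Icc 1 n, Y k)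
    ε ht hintX
  have heq : {ω | ε ≤ ((T Z n ω : ℕ) : ℝ)} = {ω | ε ≤ (∑ k ∈ Finset.Icc 1 n, Y k) ω} := by
    ext ω; rw [← hX]
  rw [heq]
  refine hch.trans ?_
  gcongr
  rw [hYindep.mgf_sum hYmeas]
  have hbound : ∀ k ∈ Finset.Icc 1 n, mgf (Y k) ℙ t ≤ Real.exp (t * Real.exp (t * n)) := by
    intro k hk
    obtain ⟨hk1, hkn⟩ := Finset.mem_Icc.mp hk
    rw [(mgf_single Z hZmeas hZ1 hZ0 k hk1 t).2]
    have hkpos : (0:ℝ) < k := by exact_mod_cast hk1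
    have h1 : Real.exp (t * k) - 1 ≤ t * k * Real.exp (t * k) := by
      have h := Real.add_one_le_exp (-(t * k))
      have he := Real.exp_pos (t * k)
      have : Real.exp (-(t*k)) = (Real.exp (t*k))⁻¹ := Real.exp_neg _
      rw [this] at h
      have := mul_le_mul_of_nonneg_right h he.le
      rw [inv_mul_cancel₀ he.ne'] at this
      nlinarith
    have h2 : Real.exp (t * k) ≤ Real.exp (t * n) := by
      apply Real.exp_le_exp.mpr
      have : (k:ℝ) ≤ n := by exact_mod_cast hkn
      nlinarith
    have h3 : (1 - 1/(k:ℝ)) + Real.exp (t * k) * (1/(k:ℝ))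
        = 1 + (Real.exp (t * k) - 1) / k := by field_simp; ring
    rw [h3]
    have h4 : (Real.exp (t * k) - 1) / k ≤ t * Real.exp (t * n) := by
      rw [div_le_iff₀ hkpos]
      calc Real.exp (t * k) - 1 ≤ t * k * Real.exp (t * k) := h1
        _ ≤ t * k * Real.exp (t * n) := by
            apply mul_le_mul_of_nonneg_left h2; positivity
        _ = t * Real.exp (t * n) * k := by ring
    calc 1 + (Real.exp (t * k) - 1) / k ≤ 1 + t * Real.exp (t * n) := by linarith
      _ ≤ Real.exp (t * Real.exp (t * n)) := by
          have := Real.add_one_le_exp (t * Real.exp (t * n)); linarith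
  calc ∏ k ∈ Finset.Icc 1 n, mgf (Y k) ℙ t
      ≤ ∏ k ∈ Finset.Icc 1 n, Real.exp (t * Real.exp (t * n)) := by
        apply Finset.prod_le_prod
        · intro k hk
          exact mgf_nonneg
        · exact hbound
    _ = Real.exp (t * Real.exp (t * n)) ^ (Finset.Icc 1 n).card := Finset.prod_const _
    _ = Real.exp (n * (t * Real.exp (t * n))) := by
        rw [Nat.card_Icc]
        simp [← Real.exp_nat_mul]

lemma tail_eq (Z : ℕ → Ω → ℕ) (hZmeas : ∀ k, Measurable (Z k)) (n : ℕ) (M : ℝ) :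
    (∑' m : ℕ, if M < (m : ℝ) then (ℙ {ω | T Z n ω = m}).toReal else 0)
      = (ℙ {ω | M < ((T Z n ω : ℕ) : ℝ)}).toReal := by
  classical
  have hTmeas : Measurable (T Z n) := by
    apply Finset.measurable_sum
    intro k _
    exact (measurable_from_top (f := fun m : ℕ => k * m)).comp (hZmeas k)
  set S : ℕ → Set Ω := fun m => if M < (m:ℝ) then {ω | T Z n ω = m} else ∅ with hS
  have hSmeas : ∀ m, MeasurableSet (S m) := by
    intro m
    by_cases h : M < (m:ℝ)
    · simp only [hS]
      rw [if_pos h]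
      exact hTmeas (measurableSet_singleton m)
    · simp [hS, h]
  have hdisj : Pairwise (Function.onFun Disjoint S) := by
    intro m m' hmm'
    simp only [Function.onFun, hS]
    by_cases h : M < (m:ℝ) <;> by_cases h' : M < (m':ℝ) <;> simp [h, h']
    rw [Set.disjoint_left]
    intro ω h1 h2
    simp only [Set.mem_setOf_eq] at h1 h2
    exact hmm' (h1 ▸ h2 ▸ rfl)
  have hU : (⋃ m, S m) = {ω | M < ((T Z n ω : ℕ) : ℝ)} := by
    ext ω
    simp only [Set.mem_iUnion, hS, Set.mem_setOf_eq]
    constructor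
    · rintro ⟨m, hm⟩
      by_cases h : M < (m:ℝ)
      · simp only [h, if_true, Set.mem_setOf_eq] at hm
        rw [hm]; exact h
      · simp [h] at hm
    · intro h
      exact ⟨T Z n ω, by simp [h]⟩
  have hmeasU := MeasureTheory.measure_iUnion (μ := ℙ) hdisj hSmeas
  rw [hU] at hmeasU
  rw [hmeasU, ENNReal.tsum_toReal_eq (fun m => measure_ne_top _ _)]
  congr 1
  funext m
  by_cases h : M < (m:ℝ) <;> simp [hS, h]

end Aux

theorem tail_probability_bound
    {Ω : Type*} [MeasureSpace Ω] [IsProbabilityMeasure (ℙ : Measure Ω)]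
    (Z : ℕ → Ω → ℕ) (hZmeas : ∀ k, Measurable (Z k))
    (hZindep : iIndepFun Z ℙ)
    (hZ1 : ∀ k : ℕ, 1 ≤ k → ℙ {ω | Z k ω = 1} = 1 / k)
    (hZ0 : ∀ k : ℕ, 1 ≤ k → ℙ {ω | Z k ω = 0} = 1 - 1 / k) :
    ∃ c₀ > (0 : ℝ), ∀ c ≥ c₀, ∃ C : ℝ, ∀ n : ℕ, 3 ≤ n →
      (∑' m : ℕ, if Mfun c n < (m : ℝ) then (ℙ {ω | T Z n ω = m}).toReal else 0) ≤
        C / n := by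
  simp only [Mfun]
  refine ⟨6, by norm_num, fun c hc => ⟨1, fun n hn => ?_⟩⟩
  have nr : (3:ℝ) ≤ (n:ℝ) := by exact_mod_cast hn
  have npos : (0:ℝ) < n := by linarith
  set M : ℝ := c * n * Real.log n / Real.log (Real.log (3 * n)) with hM
  set G : ℝ := Real.log (3 * (n:ℝ)) with hG
  have hG1 : 1 < G := by
    rw [hG]
    have h9 : Real.exp 1 < 3 * (n:ℝ) := by
      have := Real.exp_one_lt_d9
      linarith
    calc (1:ℝ) = Real.log (Real.exp 1) := (Real.log_exp 1).symm
      _ < Real.log (3 * n) := Real.log_lt_log (Real.exp_pos 1) h9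
  set L : ℝ := Real.log G with hL
  have hLpos : 0 < L := Real.log_pos hG1
  have hlogn : Real.log 3 ≤ Real.log n := Real.log_le_log (by norm_num) nr
  have hlog3 : (1:ℝ) < Real.log 3 := by
    have h3 : Real.exp 1 < 3 := by
      have := Real.exp_one_lt_d9; linarith
    calc (1:ℝ) = Real.log (Real.exp 1) := (Real.log_exp 1).symm
      _ < Real.log 3 := Real.log_lt_log (Real.exp_pos 1) h3
  have hlognpos : 0 < Real.log n := by linarith
  set t : ℝ := L / (2 * n) with ht
  have htpos : 0 < t := by positivity
  -- tail = probability, then Chernoff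
  refine (tail_eq Z hZmeas n M).trans_le ?_
  have hsub : (ℙ {ω | M < ((T Z n ω : ℕ) : ℝ)}).toReal
      ≤ (ℙ {ω | M ≤ ((T Z n ω : ℕ) : ℝ)}).toReal := by
    apply ENNReal.toReal_mono (measure_ne_top _ _)
    apply measure_mono
    intro ω hω
    simp only [Set.mem_setOf_eq] at hω ⊢
    exact hω.le
  refine hsub.trans ?_
  refine (chernoffT Z hZmeas hZindep hZ1 hZ0 n t htpos.le M).trans ?_
  rw [← Real.exp_add]
  have hL0 : L ≠ 0 := hLpos.ne'
  have hn0 : (n:ℝ) ≠ 0 := npos.ne'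
  have htn : t * n = L / 2 := by
    rw [ht]; field_simp
  set E : ℝ := Real.exp (t * n) with hE
  have hE2 : E * E = G := by
    rw [hE, ← Real.exp_add, htn]
    rw [show L / 2 + L / 2 = L by ring, hL]
    exact Real.exp_log (by linarith)
  have hEpos : 0 < E := Real.exp_pos _
  have hLE : L ≤ 2 * E := by
    have hlogE : Real.log E = L / 2 := by rw [hE, Real.log_exp, htn]
    have := Real.log_le_sub_one_of_pos hEpos
    rw [hlogE] at this
    linarith
  have harg : (n:ℝ) * (t * E) = (L / 2) * E := by
    rw [ht]; field_simp
  have hargle : (n:ℝ) * (t * E) ≤ 2 * Real.log n := by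
    rw [harg]
    have h1 : (L / 2) * E ≤ E * E := by
      have : L / 2 ≤ E := by linarith
      nlinarith
    have h2 : G ≤ 2 * Real.log n := by
      rw [hG, Real.log_mul (by norm_num) (by positivity)]
      linarith
    linarith [hE2 ▸ h1]
  have htM : t * M = c * Real.log n / 2 := by
    rw [ht, hM]
    field_simp
  have hexp : -t * M + (n:ℝ) * (t * E) ≤ -Real.log n := by
    have : -t * M = -(c * Real.log n / 2) := by rw [neg_mul, htM]
    rw [this]
    have hc' : 3 * Real.log n ≤ c * Real.log n / 2 := by nlinarith
    linarith
  calc Real.exp (-t * M + n * (t * E)) ≤ Real.exp (-Real.log n) := Real.exp_le_exp.mpr hexp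
    _ = 1 / n := by
        rw [Real.exp_neg, Real.exp_log npos]; ring
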